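/- For every m ≥ 4, the maximal degree of a binary 2-covering array of size m equals binom(m−1, ⌊m/2⌋−1); that is, CAN̄(2,m,2) = binom(m−1, ⌊m/2⌋−1). -/

import Mathlib

/-- An `m × n` matrix over `B_q = {0,…,q-1}` is a `t`-covering array if for any `t`
distinct column indices and any `q`-ary vector of length `t`, some row realizes it. -/
def IsCoveringArray (m n q t : ℕ) (C : Fin m → Fin n → Fin q) : Prop :=
  ∀ cols : Fin t → Fin n, Function.Injective cols →
    ∀ v : Fin t → Fin q, ∃ r : Fin m, ∀ j : Fin t, C r (cols j) = v j

/-- `CAN t n q` : the minimal size `m` for which a `CA(m; t, n, q)` exists. -/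
noncomputable def CAN (t n q : ℕ) : ℕ :=
  sInf { m | ∃ C : Fin m → Fin n → Fin q, IsCoveringArray m n q t C }

/-- The weight of the `i`-th column: the number of nonzero entries. -/
def colWt {m n q : ℕ} (C : Fin m → Fin n → Fin q) (i : Fin n) : ℕ :=
  (Finset.univ.filter fun r : Fin m => (C r i : ℕ) ≠ 0).card

/-- The support of the `i`-th column: the set of coordinates where it is nonzero. -/
def colSupp {m n q : ℕ} (C : Fin m → Fin n → Fin q) (i : Fin n) : Finset (Fin m) :=
  Finset.univ.filter fun r : Fin m => (C r i : ℕ) ≠ 0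

/-- The Hamming distance between the `i`-th and `j`-th columns. -/
def colDist {m n q : ℕ} (C : Fin m → Fin n → Fin q) (i j : Fin n) : ℕ :=
  (Finset.univ.filter fun r : Fin m => C r i ≠ C r j).card

/-- Two arrays are equivalent if one is obtained from the other by a row permutation,
a column permutation, and value permutations applied columnwise. -/
def CAEquiv {m n q : ℕ} (C C' : Fin m → Fin n → Fin q) : Prop :=
  ∃ (σ : Equiv.Perm (Fin m)) (τ : Equiv.Perm (Fin n)) (f : Fin n → Equiv.Perm (Fin q)),
    ∀ r i, C' r i = f i (C (σ r) (τ i))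

/-- The standard maximal binary 2-covering array of size `m` : an
`m × (m-1).choose (m/2 - 1)` binary matrix whose first row is all ones and whose columns,
restricted to the remaining `m - 1` rows, are exactly (i.e. are pairwise distinct) the binary
vectors of length `m-1` with `m/2 - 1` ones. -/
def IsStandardMaxArray (m : ℕ) (S : Fin m → Fin ((m-1).choose (m/2 - 1)) → Fin 2) : Prop :=
  (∀ (r : Fin m) (i), (r : ℕ) = 0 → S r i = 1) ∧
  (Function.Injective fun i => fun r => S r i) ∧
  (∀ i, (Finset.univ.filter fun r : Fin m => (r : ℕ) ≠ 0 ∧ S r i = 1).card = m/2 - 1)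


open Finset
open scoped FinsetFamily

namespace KS

/-- Upward local LYM: if all sets have size `s` with `2s+1 ≤ N`, the up-shadow is at least
as large. -/
lemma card_le_card_upShadow {N s : ℕ} (𝒜 : Finset (Finset (Fin N)))
    (hsz : (𝒜 : Set (Finset (Fin N))).Sized s) (h : 2 * s + 1 ≤ N) :
    #𝒜 ≤ #(∂⁺ 𝒜) := by
  have hBsz : (𝒜ᶜˢ : Set (Finset (Fin N))).Sized (N - s) := by
    simpa using hsz.compls
  have hlym := Finset.card_mul_le_card_shadow_mul hBsz
  rw [Finset.shadow_compls, Finset.card_compls, Finset.card_compls] at hlym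
  have hc : Fintype.card (Fin N) = N := Fintype.card_fin N
  rw [hc] at hlym
  have h1 : N - (N - s) + 1 = s + 1 := by omega
  rw [h1] at hlym
  have h2 : #𝒜 * (s + 1) ≤ #𝒜 * (N - s) := by
    apply Nat.mul_le_mul_left; omega
  have := h2.trans hlym
  exact Nat.le_of_mul_le_mul_right this (by omega)

/-- There exists an initial segment of colex of any cardinality `g` within level `s`. -/
lemma exists_isInitSeg {N s g : ℕ}
    (hg : g ≤ #(powersetCard s (univ : Finset (Fin N)))) :
    ∃ 𝒞 : Finset (Finset (Fin N)), 𝒞 ⊆ powersetCard s univ ∧ #𝒞 = g ∧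
      Finset.Colex.IsInitSeg 𝒞 s := by
  induction g with
  | zero => exact ⟨∅, by simp, by simp, by simp⟩
  | succ g ih =>
    obtain ⟨𝒞, hsub, hcard, hinit⟩ := ih (by omega)
    have hne : (powersetCard s (univ : Finset (Fin N)) \ 𝒞).Nonempty := by
      rw [← Finset.card_pos, Finset.card_sdiff_of_subset hsub]
      omega
    obtain ⟨A, hA, hmin⟩ := Finset.exists_min_image _ toColex hne
    rw [Finset.mem_sdiff] at hA
    refine ⟨insert A 𝒞, ?_, ?_, ?_, ?_⟩
    · exact Finset.insert_subset hA.1 hsub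
    · rw [Finset.card_insert_of_notMem hA.2, hcard]
    · intro B hB
      rcases Finset.mem_insert.1 hB with rfl | hB
      · exact (Finset.mem_powersetCard.1 hA.1).2
      · exact hinit.1 hB
    · intro t₁ t₂ ht₁ ht₂
      rcases Finset.mem_insert.1 ht₁ with rfl | ht₁
      · by_cases h2 : t₂ ∈ 𝒞
        · exact Finset.mem_insert_of_mem h2
        · have ht₂mem : t₂ ∈ powersetCard s (univ : Finset (Fin N)) := by
            rw [Finset.mem_powersetCard]; exact ⟨Finset.subset_univ _, ht₂.2⟩
          have := hmin t₂ (Finset.mem_sdiff.2 ⟨ht₂mem, h2⟩)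
          exact absurd ht₂.1 (not_lt.2 this)
      · exact Finset.mem_insert_of_mem (hinit.2 ht₁ ht₂)

lemma card_le_card_upShadow_of_intersecting {N s : ℕ} (𝒜 : Finset (Finset (Fin N)))
    (hsz : (𝒜 : Set (Finset (Fin N))).Sized s) (hN : N = 2 * s)
    (hInt : Set.Intersecting (𝒜 : Set (Finset (Fin N)))) :
    #𝒜 ≤ #(∂⁺ 𝒜) := by
  classical
  rcases Nat.eq_zero_or_pos s with rfl | hspos
  · have : 𝒜 = ∅ := by
      rw [eq_empty_iff_forall_notMem]
      intro A hAmem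
      have hA0 : A = ∅ := card_eq_zero.1 (hsz hAmem)
      exact hInt hAmem hAmem (by simp [hA0])
    simp [this]
  obtain ⟨M, rfl⟩ : ∃ M, N = M + 1 := ⟨N - 1, by omega⟩
  have hM : M + 1 = 2 * s := hN
  -- EKR
  have h1 : #𝒜 ≤ M.choose s := by
    have hekr := Finset.erdos_ko_rado hInt hsz (by omega : s ≤ (M + 1) / 2)
    have heq : (M + 1 - 1).choose (s - 1) = M.choose s := by
      simp only [Nat.add_sub_cancel]
      rw [← Nat.choose_symm (by omega : s - 1 ≤ M)]
      congr 1
      omega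
    rw [heq] at hekr
    exact hekr
  -- complements
  have hBsz : ((𝒜ᶜˢ : Finset (Finset (Fin (M+1)))) : Set (Finset (Fin (M+1)))).Sized s := by
    have := hsz.compls
    rwa [Fintype.card_fin, show M + 1 - s = s by omega] at this
  have hcardB : #(𝒜ᶜˢ) = #𝒜 := card_compls _
  have hshB : #(∂ (𝒜ᶜˢ)) = #(∂⁺ 𝒜) := by
    rw [Finset.shadow_compls, card_compls]
  -- initial segment of same size
  obtain ⟨𝒞, h𝒞sub, h𝒞card, h𝒞init⟩ := exists_isInitSeg (N := M + 1) (s := s) (g := #(𝒜ᶜˢ))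
    (by
      rw [card_powersetCard, card_univ, Fintype.card_fin]
      calc #(𝒜ᶜˢ) = #𝒜 := card_compls _
        _ ≤ M.choose s := h1
        _ ≤ (M + 1).choose s := Nat.choose_le_choose s (by omega))
  -- members of 𝒞 avoid the top element
  have havoid : ∀ A ∈ 𝒞, Fin.last M ∉ A := by
    intro A hA hlast
    have hsubset : powersetCard s (univ.erase (Fin.last M)) ⊆ 𝒞 := by
      intro B hB'
      rw [mem_powersetCard] at hB'
      have hBlast : Fin.last M ∉ B := fun h => (mem_erase.1 (hB'.1 h)).1 rfl
      refine h𝒞init.2 hA ⟨?_, hB'.2⟩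
      rw [Finset.Colex.toColex_lt_toColex_iff_exists_forall_lt]
      refine ⟨Fin.last M, hlast, hBlast, ?_⟩
      intro b hb _
      refine (Fin.le_last b).lt_of_ne ?_
      intro he
      rw [he] at hb
      exact hBlast hb
    have hAnot : A ∉ powersetCard s (univ.erase (Fin.last M)) := fun hc =>
      (mem_erase.1 ((mem_powersetCard.1 hc).1 hlast)).1 rfl
    have hbig : M.choose s + 1 ≤ #𝒞 := by
      have h2 : #(powersetCard s (univ.erase (Fin.last M))) = M.choose s := by
        rw [card_powersetCard, card_erase_of_mem (mem_univ _), card_univ, Fintype.card_fin]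
        simp
      calc M.choose s + 1 = #(insert A (powersetCard s (univ.erase (Fin.last M)))) := by
            rw [card_insert_of_notMem hAnot, h2]
        _ ≤ #𝒞 := card_le_card (insert_subset hA hsubset)
    omega
  -- Kruskal–Katona
  have hKK : #(∂ 𝒞) ≤ #(∂ (𝒜ᶜˢ)) := by
    have h := Finset.kruskal_katona hBsz (le_of_eq h𝒞card) h𝒞init
    convert h using 3
  -- transport 𝒞 to Fin M
  set emb : Fin M ↪ Fin (M + 1) := ⟨Fin.castSucc, Fin.castSucc_injective M⟩ with hemb
  set 𝒞₀ : Finset (Finset (Fin M)) :=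
    (univ : Finset (Finset (Fin M))).filter (fun B => B.map emb ∈ 𝒞) with h𝒞₀
  have hmap_mem : ∀ B : Finset (Fin M), B ∈ 𝒞₀ ↔ B.map emb ∈ 𝒞 := by
    intro B; rw [h𝒞₀, mem_filter]; simp
  have hc0card : #𝒞₀ = #𝒞 := by
    apply card_bij (fun B _ => B.map emb)
    · intro B hB; exact (hmap_mem B).1 hB
    · intro B₁ h₁ B₂ h₂ h
      exact Finset.map_injective emb h
    · intro A hA
      have hAavoid := havoid A hA
      refine ⟨A.preimage emb (Set.injOn_of_injective emb.injective), ?_, ?_⟩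
      · rw [hmap_mem]
        have : (A.preimage emb (Set.injOn_of_injective emb.injective)).map emb = A := by
          ext y
          simp only [mem_map, mem_preimage]
          constructor
          · rintro ⟨x, hx, rfl⟩; exact hx
          · intro hy
            have hyne : y ≠ Fin.last M := fun h => hAavoid (h ▸ hy)
            obtain ⟨x, hx⟩ := Fin.exists_castSucc_eq.2 hyne
            refine ⟨x, ?_, ?_⟩ <;> simp only [hemb, Function.Embedding.coeFn_mk]
            · rw [hx]; exact hy
            · exact hx
        rw [this]; exact hA
      · ext y
        simp only [mem_map, mem_preimage]
        constructor
        · rintro ⟨x, hx, rfl⟩; exact hx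
        · intro hy
          have hyne : y ≠ Fin.last M := fun h => hAavoid (h ▸ hy)
          obtain ⟨x, hx⟩ := Fin.exists_castSucc_eq.2 hyne
          refine ⟨x, ?_, ?_⟩ <;> simp only [hemb, Function.Embedding.coeFn_mk]
          · rw [hx]; exact hy
          · exact hx
  have hc0sized : ((𝒞₀ : Finset (Finset (Fin M))) : Set (Finset (Fin M))).Sized s := by
    intro B hB
    have := h𝒞init.1 ((hmap_mem B).1 hB)
    rwa [card_map] at this
  -- local LYM over Fin M
  have hLYM : #𝒞₀ ≤ #(∂ 𝒞₀) := by
    have hlym := Finset.card_mul_le_card_shadow_mul hc0sized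
    rw [Fintype.card_fin] at hlym
    have : M - s + 1 = s := by omega
    rw [this] at hlym
    exact Nat.le_of_mul_le_mul_right hlym hspos
  -- mapping shadows
  have hmapsh : #(∂ 𝒞₀) ≤ #(∂ 𝒞) := by
    have himg : (∂ 𝒞₀).image (fun t => t.map emb) ⊆ ∂ 𝒞 := by
      intro t' ht'
      obtain ⟨t, ht, rfl⟩ := mem_image.1 ht'
      obtain ⟨B, hB, htB, hcard⟩ := Finset.mem_shadow_iff_exists_mem_card_add_one.1 ht
      refine Finset.mem_shadow_iff_exists_mem_card_add_one.2
        ⟨B.map emb, (hmap_mem B).1 hB, map_subset_map.2 htB, ?_⟩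
      rw [card_map, card_map, hcard]
    calc #(∂ 𝒞₀) = #((∂ 𝒞₀).image (fun t => t.map emb)) :=
          (card_image_of_injective _ (Finset.map_injective emb)).symm
      _ ≤ #(∂ 𝒞) := card_le_card himg
  omega


lemma down {N : ℕ} (j : ℕ) :
    ∀ 𝒜 : Finset (Finset (Fin N)), IsAntichain (· ⊆ ·) (𝒜 : Set (Finset (Fin N))) →
    (∀ A ∈ 𝒜, N / 2 + 1 ≤ #A ∧ #A ≤ N / 2 + 1 + j) → #𝒜 ≤ N.choose (N / 2 + 1) := by
  induction j with
  | zero =>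
    intro 𝒜 hA hsz
    have hsub : 𝒜 ⊆ powersetCard (N / 2 + 1) (univ : Finset (Fin N)) := by
      intro A hAmem
      rw [mem_powersetCard]
      exact ⟨subset_univ _, by have := hsz A hAmem; omega⟩
    calc #𝒜 ≤ #(powersetCard (N / 2 + 1) (univ : Finset (Fin N))) := card_le_card hsub
      _ = N.choose (N / 2 + 1) := by rw [card_powersetCard, card_univ, Fintype.card_fin]
  | succ j ih =>
    intro 𝒜 hA hsz
    classical
    set d := N / 2 + 1 + j + 1 with hd
    set F1 := 𝒜.filter (fun A => #A = d) with hF1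
    set F2 := 𝒜.filter (fun A => ¬ #A = d) with hF2
    have hF1sub : F1 ⊆ 𝒜 := filter_subset _ _
    have hF2sub : F2 ⊆ 𝒜 := filter_subset _ _
    have hF1sz : (F1 : Set (Finset (Fin N))).Sized d := fun A hAmem => by
      simpa using (mem_filter.1 hAmem).2
    -- the lower shadow of F1 is at least as large
    have hshsz : ((∂ F1 : Finset (Finset (Fin N))) : Set (Finset (Fin N))).Sized (d - 1) :=
      hF1sz.shadow
    have hsh : #F1 ≤ #(∂ F1) := by
      have hlym := Finset.card_mul_le_card_shadow_mul hF1sz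
      rw [Fintype.card_fin] at hlym
      have h2 : #(∂ F1) * (N - d + 1) ≤ #(∂ F1) * d := by
        apply Nat.mul_le_mul_left; omega
      exact Nat.le_of_mul_le_mul_right (hlym.trans h2) (by omega)
    set 𝒜' := F2 ∪ ∂ F1 with h𝒜'
    -- disjointness
    have hdisj : Disjoint F2 (∂ F1) := by
      rw [disjoint_left]
      intro X hX2 hXsh
      obtain ⟨B, hB, hXB⟩ := exists_subset_of_mem_shadow hXsh
      have hXcard : #X = d - 1 := hshsz hXsh
      have hne : X ≠ B := by
        intro h; rw [h] at hXcard; rw [hF1sz hB] at hXcard; omega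
      exact hA (hF2sub hX2) (hF1sub hB) hne hXB
    -- antichain
    have hA' : IsAntichain (· ⊆ ·) (𝒜' : Set (Finset (Fin N))) := by
      intro X hX Y hY hne hXY
      simp only [h𝒜', coe_union, Set.mem_union, mem_coe] at hX hY
      rcases hX with hX | hX <;> rcases hY with hY | hY
      · exact hA (hF2sub hX) (hF2sub hY) hne hXY
      · obtain ⟨B, hB, hYB⟩ := exists_subset_of_mem_shadow hY
        have hXB : X ≠ B := by
          intro h
          have := hshsz hY
          have := hF1sz hB
          have hXc := (mem_filter.1 hX).2
          subst h
          have : #Y < #X := by omega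
          exact absurd (card_le_card hXY) (by omega)
        exact hA (hF2sub hX) (hF1sub hB) hXB (hXY.trans hYB)
      · -- X in shadow, Y in F2 : #X = d-1, #Y ≤ d-1 (since ≠ d, ≤ d), so X = Y
        have hXc := hshsz hX
        have hYc := (mem_filter.1 hY).2
        have hYle := (hsz Y (hF2sub hY)).2
        have : #Y ≤ #X := by omega
        exact hne (eq_of_subset_of_card_le hXY this)
      · have hXc := hshsz hX
        have hYc := hshsz hY
        exact hne (eq_of_subset_of_card_le hXY (by omega))
    -- sizes
    have hsz' : ∀ A ∈ 𝒜', N / 2 + 1 ≤ #A ∧ #A ≤ N / 2 + 1 + j := by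
      intro A hAmem
      rcases mem_union.1 hAmem with h | h
      · have h1 := (mem_filter.1 h).2
        have h2 := hsz A (hF2sub h)
        omega
      · have := hshsz h
        omega
    -- cardinality
    have hcards : #𝒜 ≤ #𝒜' := by
      have h1 : #𝒜' = #F2 + #(∂ F1) := by
        rw [h𝒜', card_union_of_disjoint hdisj]
      have h2 : #𝒜 = #F2 + #F1 := by
        rw [hF1, hF2]
        exact (card_filter_add_card_filter_not (p := fun A => #A = d)).symm.trans (by omega)
      omega
    exact hcards.trans (ih 𝒜' hA' hsz')

lemma up {N : ℕ} (i : ℕ) :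
    ∀ 𝒜 : Finset (Finset (Fin N)), IsAntichain (· ⊆ ·) (𝒜 : Set (Finset (Fin N))) →
    Set.Intersecting (𝒜 : Set (Finset (Fin N))) →
    (∀ A ∈ 𝒜, N / 2 + 1 ≤ #A + i) → #𝒜 ≤ N.choose (N / 2 + 1) := by
  induction i with
  | zero =>
    intro 𝒜 hA hInt hsz
    exact down N 𝒜 hA (fun A hAmem => ⟨by have := hsz A hAmem; omega,
      by have : #A ≤ N := (card_le_univ A).trans_eq (by simp); omega⟩)
  | succ i ih =>
    intro 𝒜 hA hInt hsz
    classical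
    by_cases hall : ∀ A ∈ 𝒜, N / 2 + 1 ≤ #A + i
    · exact ih 𝒜 hA hInt hall
    push_neg at hall
    obtain ⟨A₀, hA₀, hlt⟩ := hall
    set s := #A₀ with hs0
    have hs : s + (i + 1) = N / 2 + 1 := by have := hsz A₀ hA₀; omega
    have hsmall : ∀ A ∈ 𝒜, s ≤ #A := by
      intro A hAmem; have := hsz A hAmem; omega
    set F1 := 𝒜.filter (fun A => #A = s) with hF1
    set F2 := 𝒜.filter (fun A => ¬ #A = s) with hF2
    have hF1sub : F1 ⊆ 𝒜 := filter_subset _ _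
    have hF2sub : F2 ⊆ 𝒜 := filter_subset _ _
    have hF1sz : (F1 : Set (Finset (Fin N))).Sized s := fun A hAmem => by
      simpa using (mem_filter.1 hAmem).2
    have hshsz : ((∂⁺ F1 : Finset (Finset (Fin N))) : Set (Finset (Fin N))).Sized (s + 1) :=
      hF1sz.upShadow
    -- up-shadow at least as large
    have hsh : #F1 ≤ #(∂⁺ F1) := by
      rcases Nat.lt_or_ge (2 * s) N with h | h
      · exact card_le_card_upShadow F1 hF1sz (by omega)
      · have hNeq : N = 2 * s := by omega
        exact card_le_card_upShadow_of_intersecting F1 hF1sz hNeq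
          (hInt.mono (by exact_mod_cast coe_subset.2 hF1sub))
    set 𝒜' := F2 ∪ ∂⁺ F1 with h𝒜'
    have hdisj : Disjoint F2 (∂⁺ F1) := by
      rw [disjoint_left]
      intro X hX2 hXsh
      obtain ⟨B, hB, hBX⟩ := exists_subset_of_mem_upShadow hXsh
      have hne : B ≠ X := by
        intro h; subst h
        exact (mem_filter.1 hX2).2 (hF1sz hB)
      exact hA (hF1sub hB) (hF2sub hX2) hne hBX
    have hA' : IsAntichain (· ⊆ ·) (𝒜' : Set (Finset (Fin N))) := by
      intro X hX Y hY hne hXY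
      simp only [h𝒜', coe_union, Set.mem_union, mem_coe] at hX hY
      rcases hX with hX | hX <;> rcases hY with hY | hY
      · exact hA (hF2sub hX) (hF2sub hY) hne hXY
      · -- X ∈ F2 (#X ≥ s+1), Y ∈ ∂⁺F1 (#Y = s+1) : X = Y
        have hXc := (mem_filter.1 hX).2
        have hXge := hsmall X (hF2sub hX)
        have hYc := hshsz hY
        exact hne (eq_of_subset_of_card_le hXY (by omega))
      · -- X ∈ ∂⁺F1 : X ⊇ B ∈ F1, B ⊆ Y, B ≠ Y
        obtain ⟨B, hB, hBX⟩ := exists_subset_of_mem_upShadow hX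
        have hBne : B ≠ Y := by
          intro h; subst h
          exact (mem_filter.1 hY).2 (hF1sz hB)
        exact hA (hF1sub hB) (hF2sub hY) hBne (hBX.trans hXY)
      · have hXc := hshsz hX
        have hYc := hshsz hY
        exact hne (eq_of_subset_of_card_le hXY (by omega))
    have hInt' : Set.Intersecting (𝒜' : Set (Finset (Fin N))) := by
      have hcover : ∀ X ∈ 𝒜', ∃ B ∈ 𝒜, B ⊆ X := by
        intro X hX
        rcases mem_union.1 hX with h | h
        · exact ⟨X, hF2sub h, subset_rfl⟩
        · obtain ⟨B, hB, hBX⟩ := exists_subset_of_mem_upShadow h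
          exact ⟨B, hF1sub hB, hBX⟩
      intro X hX Y hY hd
      obtain ⟨B, hB, hBX⟩ := hcover X hX
      obtain ⟨B', hB', hBY⟩ := hcover Y hY
      exact hInt hB hB' (hd.mono hBX hBY)
    have hsz' : ∀ A ∈ 𝒜', N / 2 + 1 ≤ #A + i := by
      intro A hAmem
      rcases mem_union.1 hAmem with h | h
      · have h1 := (mem_filter.1 h).2
        have h2 := hsmall A (hF2sub h)
        omega
      · have := hshsz h
        omega
    have hcards : #𝒜 ≤ #𝒜' := by
      have h1 : #𝒜' = #F2 + #(∂⁺ F1) := by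
        rw [h𝒜', card_union_of_disjoint hdisj]
      have h2 : #F1 + #F2 = #𝒜 := by
        rw [hF1, hF2]
        exact (card_filter_add_card_filter_not (p := fun A => #A = s))
      omega
    exact hcards.trans (ih 𝒜' hA' hInt' hsz')

/-- **Milner's theorem**: an intersecting antichain on `Fin N` has at most
`N.choose (N/2 + 1)` members. -/
theorem milner {N : ℕ} (𝒜 : Finset (Finset (Fin N)))
    (hA : IsAntichain (· ⊆ ·) (𝒜 : Set (Finset (Fin N))))
    (hInt : Set.Intersecting (𝒜 : Set (Finset (Fin N)))) :
    #𝒜 ≤ N.choose (N / 2 + 1) :=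
  up (N / 2 + 1) 𝒜 hA hInt fun A _ => by omega

end KS


/-- for `m ≥ 4`, the maximal degree of a binary 2-covering array of size `m`
equals `(m-1).choose (m/2 - 1)`: such an array of this degree exists, and no larger degree
is possible. -/

theorem max_degree_eq (m : ℕ) (hm : 4 ≤ m) :
    (∃ C : Fin m → Fin ((m-1).choose (m/2 - 1)) → Fin 2,
      IsCoveringArray m ((m-1).choose (m/2 - 1)) 2 2 C) ∧
    (∀ (n : ℕ) (C : Fin m → Fin n → Fin 2),
      IsCoveringArray m n 2 2 C → n ≤ (m-1).choose (m/2 - 1)) := by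
  classical
  obtain ⟨M, rfl⟩ : ∃ M, m = M + 1 := ⟨m - 1, by omega⟩
  have hM : 3 ≤ M := by omega
  have hZ : ∀ t : Fin 2, t = 0 ∨ t = 1 := by decide
  set k := (M + 1) / 2 - 1 with hk
  have hkM : 2 * k ≤ M - 1 := by omega
  have hk1 : 1 ≤ k := by omega
  have hsimp : (M + 1 - 1).choose ((M + 1) / 2 - 1) = M.choose k := by
    simp [hk]
  constructor
  · -- existence of a covering array of maximal degree
    obtain ⟨e⟩ : Nonempty (Fin ((M + 1 - 1).choose ((M + 1) / 2 - 1)) ≃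
        {s : Finset (Fin M) // #s = k}) := by
      rw [← Fintype.card_eq]
      simp [hsimp, hk]
    refine ⟨fun r i => Fin.cases 1 (fun s => if s ∈ (e i).1 then 1 else 0) r, ?_⟩
    intro cols hinj v
    have hne : cols 0 ≠ cols 1 := fun h => absurd (hinj h) (by decide)
    have hST : (e (cols 0)).1 ≠ (e (cols 1)).1 :=
      fun h => hne (e.injective (Subtype.ext h))
    set S := (e (cols 0)).1 with hS
    set T := (e (cols 1)).1 with hT
    have hSc : #S = k := (e (cols 0)).2
    have hTc : #T = k := (e (cols 1)).2
    suffices h : ∃ r : Fin (M + 1),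
        (Fin.cases 1 (fun s => if s ∈ S then (1 : Fin 2) else 0) r = v 0) ∧
        (Fin.cases 1 (fun s => if s ∈ T then (1 : Fin 2) else 0) r = v 1) by
      obtain ⟨r, h1, h2⟩ := h
      refine ⟨r, fun t => ?_⟩
      rcases hZ t with rfl | rfl
      · exact h1
      · exact h2
    have hdiff : ∀ (A B : Finset (Fin M)), #A = k → #B = k → A ≠ B →
        ∃ x, x ∈ A ∧ x ∉ B := by
      intro A B hA hB hAB
      by_contra hcon
      push_neg at hcon
      exact hAB (eq_of_subset_of_card_le (fun x hx => hcon x hx) (by omega))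
    rcases hZ (v 0) with h0 | h0 <;> rcases hZ (v 1) with h1 | h1 <;> rw [h0, h1]
    · -- (0, 0) : a row outside both supports
      have hcard : #(S ∪ T) < M := by
        have := card_union_le S T
        omega
      have : ∃ x : Fin M, x ∉ S ∪ T := by
        by_contra hcon
        push_neg at hcon
        have : (univ : Finset (Fin M)) ⊆ S ∪ T := fun x _ => hcon x
        have := card_le_card this
        rw [card_univ, Fintype.card_fin] at this
        omega
      obtain ⟨x, hx⟩ := this
      rw [mem_union] at hx
      push_neg at hx
      exact ⟨x.succ, by simp [hx.1], by simp [hx.2]⟩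
    · -- (0, 1) : a row in T \ S
      obtain ⟨x, hxT, hxS⟩ := hdiff T S hTc hSc (Ne.symm hST)
      exact ⟨x.succ, by simp [hxS], by simp [hxT]⟩
    · -- (1, 0) : a row in S \ T
      obtain ⟨x, hxS, hxT⟩ := hdiff S T hSc hTc hST
      exact ⟨x.succ, by simp [hxS], by simp [hxT]⟩
    · -- (1, 1) : the first row
      exact ⟨0, by simp, by simp⟩
  · -- upper bound
    intro n C hC
    rcases Nat.lt_or_ge n 2 with hn | hn
    · have hpos : 0 < M.choose k := Nat.choose_pos (by omega)
      rw [hsimp]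
      omega
    have pair : ∀ (i j : Fin n), i ≠ j → ∀ a b : Fin 2, ∃ r, C r i = a ∧ C r j = b := by
      intro i j hij a b
      have hinj : Function.Injective (fun t : Fin 2 => if t = 0 then i else j) := by
        intro t1 t2 h
        rcases hZ t1 with rfl | rfl <;> rcases hZ t2 with rfl | rfl <;> simp_all
      obtain ⟨r, hr⟩ := hC _ hinj (fun t => if t = 0 then a else b)
      refine ⟨r, ?_, ?_⟩
      · have := hr 0; simpa using this
      · have := hr 1; simpa using this
    set oth : Fin 2 → Fin 2 := fun a => if a = 0 then 1 else 0 with hothdef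
    have hoth : ∀ a : Fin 2, oth a ≠ a := by decide
    set Φ : Fin n → Finset (Fin M) :=
      fun i => univ.filter (fun s => C s.succ i ≠ C 0 i) with hΦ
    have mem_Φ : ∀ (i : Fin n) (s : Fin M), s ∈ Φ i ↔ C s.succ i ≠ C 0 i := by
      intro i s; rw [hΦ]; simp
    have diff : ∀ i j : Fin n, i ≠ j → ∃ s, s ∈ Φ i ∧ s ∉ Φ j := by
      intro i j hij
      obtain ⟨r, h1, h2⟩ := pair i j hij (oth (C 0 i)) (C 0 j)
      have hr0 : r ≠ 0 := by
        intro h; rw [h] at h1; exact hoth (C 0 i) h1.symm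
      obtain ⟨s, rfl⟩ := Fin.exists_succ_eq_of_ne_zero hr0
      refine ⟨s, (mem_Φ i s).2 (by rw [h1]; exact hoth _), fun hmem => ?_⟩
      exact ((mem_Φ j s).1 hmem) h2
    have inter : ∀ i j : Fin n, i ≠ j → ∃ s, s ∈ Φ i ∧ s ∈ Φ j := by
      intro i j hij
      obtain ⟨r, h1, h2⟩ := pair i j hij (oth (C 0 i)) (oth (C 0 j))
      have hr0 : r ≠ 0 := by
        intro h; rw [h] at h1; exact hoth (C 0 i) h1.symm
      obtain ⟨s, rfl⟩ := Fin.exists_succ_eq_of_ne_zero hr0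
      exact ⟨s, (mem_Φ i s).2 (by rw [h1]; exact hoth _),
        (mem_Φ j s).2 (by rw [h2]; exact hoth _)⟩
    have hΦinj : Function.Injective Φ := by
      intro i j h
      by_contra hij
      obtain ⟨s, hs1, hs2⟩ := diff i j hij
      rw [h] at hs1
      exact hs2 hs1
    set 𝒜 : Finset (Finset (Fin M)) := univ.image Φ with h𝒜
    have hmem𝒜 : ∀ X ∈ 𝒜, ∃ i, Φ i = X := by
      intro X hX
      obtain ⟨i, _, hi⟩ := mem_image.1 (h𝒜 ▸ hX)
      exact ⟨i, hi⟩
    have hanti : IsAntichain (· ⊆ ·) (𝒜 : Set (Finset (Fin M))) := by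
      intro X hX Y hY hne hXY
      obtain ⟨i, rfl⟩ := hmem𝒜 X hX
      obtain ⟨j, rfl⟩ := hmem𝒜 Y hY
      have hij : i ≠ j := fun h => hne (h ▸ rfl)
      obtain ⟨s, hs1, hs2⟩ := diff i j hij
      exact hs2 (hXY hs1)
    have hint : Set.Intersecting (𝒜 : Set (Finset (Fin M))) := by
      intro X hX Y hY
      obtain ⟨i, rfl⟩ := hmem𝒜 X hX
      obtain ⟨j, rfl⟩ := hmem𝒜 Y hY
      rcases eq_or_ne i j with rfl | hij
      · have : Nontrivial (Fin n) := Fin.nontrivial_iff_two_le.2 hn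
        obtain ⟨j', hj'⟩ := exists_ne i
        obtain ⟨s, hs1, _⟩ := inter i j' (Ne.symm hj')
        exact Finset.not_disjoint_iff.2 ⟨s, hs1, hs1⟩
      · obtain ⟨s, hs1, hs2⟩ := inter i j hij
        exact Finset.not_disjoint_iff.2 ⟨s, hs1, hs2⟩
    have hn𝒜 : #𝒜 = n := by
      rw [h𝒜, card_image_of_injective _ hΦinj, card_univ, Fintype.card_fin]
    have hbound := KS.milner 𝒜 hanti hint
    have hchoose : M.choose (M / 2 + 1) = M.choose k := by
      rw [← Nat.choose_symm (show M / 2 + 1 ≤ M by omega)]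
      congr 1
      omega
    rw [hsimp]
    omega
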